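/- arXiv:1912.13074 — 9 statements merged into one kernel-verified Lean document; each statement's English description precedes it below -/
import Mathlib

section
/- Let c_v > 1/2 and define f(t) := t − (((2c_v+1)t + 1)/((2c_v+1) + t))^{(c_v+1)/c_v} for t > 0. Then f(t) > 0 for all t > 1. -/
/-- **Lemma 2.** The function `f(t) = t - (((2c_v+1)t+1)/((2c_v+1)+t))^{(c_v+1)/c_v}`
is positive for `t > 1`. -/
theorem f_pos (cv : ℝ) (hcv : 1 / 2 < cv) :
    ∀ t : ℝ, 1 < t →
      0 < t - (((2 * cv + 1) * t + 1) / ((2 * cv + 1) + t)) ^ ((cv + 1) / cv) := by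
  intro t ht
  have hcv0 : 0 < cv := by linarith
  have hcv1 : 0 < cv + 1 := by linarith
  set a : ℝ := 2 * cv + 1 with ha
  have ha2 : 2 < a := by simp [ha]; linarith
  have ht0 : 0 < t := by linarith
  set F : ℝ → ℝ := fun x => cv / (cv + 1) * Real.log x
      - Real.log (a * x + 1) + Real.log (a + x) with hF
  have hderiv : ∀ x : ℝ, 0 < x → HasDerivAt F
      (cv / (cv + 1) * x⁻¹ - a / (a * x + 1) + 1 / (a + x)) x := by
    intro x hx
    have h1 : HasDerivAt (fun x : ℝ => cv / (cv + 1) * Real.log x)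
        (cv / (cv + 1) * x⁻¹) x := (Real.hasDerivAt_log hx.ne').const_mul _
    have hax1 : (0:ℝ) < a * x + 1 := by positivity
    have hax : (0:ℝ) < a + x := by positivity
    have h2i : HasDerivAt (fun x : ℝ => a * x + 1) a x := by
      simpa using ((hasDerivAt_id x).const_mul a).add_const 1
    have h2 : HasDerivAt (fun x : ℝ => Real.log (a * x + 1)) ((a * x + 1)⁻¹ * a) x :=
      by have := (Real.hasDerivAt_log hax1.ne').comp x h2i; exact this
    have h3i : HasDerivAt (fun x : ℝ => a + x) 1 x := by
      simpa using (hasDerivAt_id x).const_add a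
    have h3 : HasDerivAt (fun x : ℝ => Real.log (a + x)) ((a + x)⁻¹ * 1) x :=
      (Real.hasDerivAt_log hax.ne').comp x h3i
    have := (h1.sub h2).add h3
    refine this.congr_deriv ?_
    ring
  have hmono : StrictMonoOn F (Set.Ici 1) := by
    apply strictMonoOn_of_deriv_pos (convex_Ici 1)
    · intro x hx
      exact (hderiv x (by exact lt_of_lt_of_le one_pos hx)).continuousAt.continuousWithinAt
    · intro x hx
      rw [interior_Ici] at hx
      have hx1 : (1:ℝ) < x := hx
      have hx0 : (0:ℝ) < x := by linarith
      rw [(hderiv x hx0).deriv]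
      have hax1 : (0:ℝ) < a * x + 1 := by positivity
      have hax : (0:ℝ) < a + x := by positivity
      have key : cv / (cv + 1) * x⁻¹ - a / (a * x + 1) + 1 / (a + x)
          = a * (a - 1) * (x - 1) ^ 2 / ((a + 1) * x * (a * x + 1) * (a + x)) := by
        have : a + 1 = 2 * (cv + 1) := by simp [ha]; ring
        field_simp [this]
        ring
      rw [key]
      apply div_pos
      · have h1 : (0:ℝ) < a - 1 := by linarith
        have h2 : (0:ℝ) < (x - 1) ^ 2 := pow_pos (by linarith) 2
        have h0 : (0:ℝ) < a := by linarith
        exact mul_pos (mul_pos h0 h1) h2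
      · have : (0:ℝ) < a + 1 := by linarith
        exact mul_pos (mul_pos (mul_pos this hx0) hax1) hax
  have hF1 : F 1 = 0 := by simp [hF, mul_one]
  have hFt : 0 < F t := by
    rw [← hF1]
    exact hmono (Set.self_mem_Ici) (le_of_lt ht) ht
  -- From F t > 0 deduce (a*t+1)/(a+t) < t ^ (cv/(cv+1))
  have hat1 : (0:ℝ) < a * t + 1 := by positivity
  have hat : (0:ℝ) < a + t := by positivity
  have hr : (0:ℝ) < (a * t + 1) / (a + t) := by positivity
  have hlog : Real.log ((a * t + 1) / (a + t)) < Real.log (t ^ (cv / (cv + 1))) := by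
    rw [Real.log_div hat1.ne' hat.ne', Real.log_rpow ht0]
    simp only [hF] at hFt
    linarith
  have hlt : (a * t + 1) / (a + t) < t ^ (cv / (cv + 1)) :=
    (Real.log_lt_log_iff hr (Real.rpow_pos_of_pos ht0 _)).mp hlog
  have hp : (0:ℝ) < (cv + 1) / cv := by positivity
  have hfin : ((a * t + 1) / (a + t)) ^ ((cv + 1) / cv)
      < (t ^ (cv / (cv + 1))) ^ ((cv + 1) / cv) :=
    Real.rpow_lt_rpow hr.le hlt hp
  rw [← Real.rpow_mul ht0.le] at hfin
  have : cv / (cv + 1) * ((cv + 1) / cv) = 1 := by field_simp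
  rw [this, Real.rpow_one] at hfin
  linarith
end

section
/- Let c_v > 1/2, ρ₋, ρ₊ > 0, 0 < p₋ < p₊ and v₋, v₊ ∈ ℝ satisfy −2√(c_v(c_v+1))·√(p₊/ρ₊)·(1−(p₋/p₊)^{1/(2(c_v+1))}) < v₋ − v₊ < (p₊−p₋)·√(2c_v/(ρ₋(p₋+(2c_v+1)p₊))). Then there exists a unique p_M with p₋ < p_M < p₊ such that v₋ − (p_M−p₋)·√(2c_v/(ρ₋(p₋+(2c_v+1)p_M))) = v₊ − 2√(c_v(c_v+1))·√(p₊/ρ₊)·(1−(p_M/p₊)^{1/(2(c_v+1))}). (The common value v_M of both sides is the velocity of the middle states: the state (ρ₋,v₋,p₋) is connected to pressure p_M and velocity v_M by an admissible 1-shock, whose curve is given by the left-hand expression, and pressure p_M, velocity v_M is connected to (ρ₊,v₊,p₊) by a 3-rarefaction wave, whose curve is given by the right-hand expression.) -/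
noncomputable def Sfun (cv ρm pm : ℝ) : ℝ → ℝ :=
  fun p => (p - pm) * Real.sqrt (2 * cv / (ρm * (pm + (2 * cv + 1) * p)))

noncomputable def Rfun (cv ρp pp : ℝ) : ℝ → ℝ :=
  fun p => 2 * Real.sqrt (cv * (cv + 1)) * Real.sqrt (pp / ρp) *
    (1 - (p / pp) ^ (1 / (2 * (cv + 1))))

lemma Sfun_mono (cv ρm pm : ℝ) (hcv : 0 < cv) (hρm : 0 < ρm) (hpm : 0 < pm)
    {a b : ℝ} (ha : pm ≤ a) (hab : a < b) : Sfun cv ρm pm a < Sfun cv ρm pm b := by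
  have hk : (0:ℝ) < 2 * cv + 1 := by linarith
  have ha0 : 0 < a := lt_of_lt_of_le hpm ha
  have hb0 : 0 < b := lt_trans ha0 hab
  have hda : 0 < ρm * (pm + (2 * cv + 1) * a) := by positivity
  have hdb : 0 < ρm * (pm + (2 * cv + 1) * b) := by positivity
  have hca : 0 ≤ 2 * cv / (ρm * (pm + (2 * cv + 1) * a)) := by positivity
  have hcb : 0 ≤ 2 * cv / (ρm * (pm + (2 * cv + 1) * b)) := by positivity
  have hSb0 : 0 ≤ Sfun cv ρm pm b := by
    unfold Sfun
    have : 0 ≤ b - pm := by linarith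
    positivity
  refine lt_of_pow_lt_pow_left₀ 2 hSb0 ?_
  unfold Sfun
  rw [mul_pow, mul_pow, Real.sq_sqrt hca, Real.sq_sqrt hcb,
    mul_div_assoc', mul_div_assoc', div_lt_div_iff₀ hda hdb]
  have hx : 0 ≤ a - pm := by linarith
  have hxy : a - pm < b - pm := by linarith
  have hy : 0 ≤ b - pm := by linarith
  have hsq : (a - pm) ^ 2 < (b - pm) ^ 2 := by nlinarith
  have core : (a - pm) ^ 2 * (pm + (2 * cv + 1) * b)
      < (b - pm) ^ 2 * (pm + (2 * cv + 1) * a) := by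
    nlinarith [mul_pos hpm (sub_pos.2 hsq),
      mul_nonneg (mul_nonneg hx hy) (sub_nonneg.2 hab.le)]
  nlinarith [mul_pos (mul_pos hcv hρm) (sub_pos.2 core)]

lemma Rfun_anti (cv ρp pp : ℝ) (hcv : 0 < cv) (hρp : 0 < ρp) (hpp : 0 < pp)
    {a b : ℝ} (ha : 0 ≤ a) (hab : a < b) : Rfun cv ρp pp b < Rfun cv ρp pp a := by
  have hα : 0 < 1 / (2 * (cv + 1)) := by positivity
  have h1 : (a / pp) ^ (1 / (2 * (cv + 1))) < (b / pp) ^ (1 / (2 * (cv + 1))) :=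
    Real.rpow_lt_rpow (by positivity) (by gcongr) hα
  have hc : 0 < 2 * Real.sqrt (cv * (cv + 1)) * Real.sqrt (pp / ρp) := by positivity
  unfold Rfun
  nlinarith [hc, h1]

/-- Existence and uniqueness of the middle pressure `p_M`: the 1-shock curve through
`(ρ₋,v₋,p₋)` and the 3-rarefaction curve through `(ρ₊,v₊,p₊)` intersect in exactly one
point with `p₋ < p_M < p₊`. -/
theorem middle_state_exists_unique
    (cv ρm ρp pm pp vm vp : ℝ)
    (hcv : 1 / 2 < cv) (hρm : 0 < ρm) (hρp : 0 < ρp) (hpm : 0 < pm) (hpmp : pm < pp)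
    (hlow : -2 * Real.sqrt (cv * (cv + 1)) * Real.sqrt (pp / ρp)
        * (1 - (pm / pp) ^ (1 / (2 * (cv + 1)))) < vm - vp)
    (hhigh : vm - vp < (pp - pm) * Real.sqrt (2 * cv / (ρm * (pm + (2 * cv + 1) * pp)))) :
    ∃! pM : ℝ, pm < pM ∧ pM < pp ∧
      vm - (pM - pm) * Real.sqrt (2 * cv / (ρm * (pm + (2 * cv + 1) * pM)))
        = vp - 2 * Real.sqrt (cv * (cv + 1)) * Real.sqrt (pp / ρp)
            * (1 - (pM / pp) ^ (1 / (2 * (cv + 1)))) := by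
  have hcv0 : (0:ℝ) < cv := by linarith
  have hpp : 0 < pp := hpm.trans hpmp
  set g : ℝ → ℝ := fun p => vm - vp - Sfun cv ρm pm p + Rfun cv ρp pp p with hg
  have hanti : StrictAntiOn g (Set.Icc pm pp) := by
    intro a haI b hbI hab
    have h1 := Sfun_mono cv ρm pm hcv0 hρm hpm haI.1 hab
    have h2 := Rfun_anti cv ρp pp hcv0 hρp hpp (le_of_lt (lt_of_lt_of_le hpm haI.1)) hab
    simp only [hg]
    linarith
  have hcont : ContinuousOn g (Set.Icc pm pp) := by
    have hS : ContinuousOn (Sfun cv ρm pm) (Set.Icc pm pp) := by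
      unfold Sfun
      apply ContinuousOn.mul
      · exact (continuous_id.sub continuous_const).continuousOn
      · apply ContinuousOn.sqrt
        apply ContinuousOn.div continuousOn_const
        · exact (continuous_const.mul (continuous_const.add
            (continuous_const.mul continuous_id))).continuousOn
        · intro x hx
          have hx0 : 0 < x := lt_of_lt_of_le hpm hx.1
          positivity
    have hR : Continuous (Rfun cv ρp pp) := by
      unfold Rfun
      apply continuous_const.mul
      apply continuous_const.sub
      have h : Continuous fun x : ℝ => x ^ (1 / (2 * (cv + 1))) := by
        rw [continuous_iff_continuousAt]
        intro x
        exact Real.continuousAt_rpow_const x _ (Or.inr (by positivity))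
      exact h.comp (continuous_id.div_const pp)
    exact (continuousOn_const.sub hS).add hR.continuousOn
  have hgpm : 0 < g pm := by
    simp only [hg, Sfun, Rfun, sub_self, zero_mul]
    linarith
  have hgpp : g pp < 0 := by
    simp only [hg, Sfun, Rfun, div_self (ne_of_gt hpp), Real.one_rpow, sub_self, mul_zero]
    linarith
  obtain ⟨c, hcI, hc⟩ := intermediate_value_Icc' (le_of_lt hpmp) hcont
    ⟨le_of_lt hgpp, le_of_lt hgpm⟩
  have hc1 : pm < c := lt_of_le_of_ne hcI.1 (by rintro rfl; rw [hc] at hgpm; exact lt_irrefl _ hgpm)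
  have hc2 : c < pp := lt_of_le_of_ne hcI.2 (by rintro rfl; rw [hc] at hgpp; exact lt_irrefl _ hgpp)
  refine ⟨c, ⟨hc1, hc2, ?_⟩, ?_⟩
  · have h0 : g c = 0 := hc
    simp only [hg, Sfun, Rfun] at h0
    linarith
  · rintro y ⟨hy1, hy2, hy⟩
    have hgy : g y = 0 := by
      simp only [hg, Sfun, Rfun]
      linarith
    exact hanti.injOn ⟨le_of_lt hy1, le_of_lt hy2⟩ hcI (by rw [hgy, hc])
end

section
/- Let c_v > 1/2, ρ₋ > 0, 0 < p₋ < p₊ and v₋ > 0 satisfy ρ₋v₋² < 2c_v(p₊−p₋)²/((2c_v+1)p₊ + p₋). Then: (a) ρ₋v₋² < p₊ − p₋, so that ρ_K := ρ₋(p₊−p₋)/(p₊−p₋−ρ₋v₋²) is well defined and ρ_K > ρ₋; (b) for all ρ₁, ρ₂ with ρ₋ < ρ₁ < ρ_K < ρ₂, the discriminant (ρ₂−ρ₁)(ρ₁−ρ₋)·[(ρ₂−ρ₋)(p₊−p₋) − ρ₋ρ₂v₋²] is strictly positive; and (c) β := (ρ₋(ρ₂−ρ₁)v₋)/(ρ₁(ρ₂−ρ₋))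 − √((ρ₂−ρ₁)(ρ₁−ρ₋)[(ρ₂−ρ₋)(p₊−p₋)−ρ₋ρ₂v₋²])/(ρ₁(ρ₂−ρ₋)) satisfies β < v₋. -/
/-- Well-definition of `ρ_K`, positivity of the discriminant and `β < v₋`. -/
theorem rhoK_discriminant_beta
    (cv ρm pm pp vm : ℝ)
    (hcv : 1 / 2 < cv) (hρm : 0 < ρm) (hpm : 0 < pm) (hpmp : pm < pp) (hvm : 0 < vm)
    (hmain : ρm * vm ^ 2 < 2 * cv * (pp - pm) ^ 2 / ((2 * cv + 1) * pp + pm)) :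
    ρm * vm ^ 2 < pp - pm ∧
    ρm < ρm * (pp - pm) / (pp - pm - ρm * vm ^ 2) ∧
    ∀ ρ1 ρ2 : ℝ, ρm < ρ1 → ρ1 < ρm * (pp - pm) / (pp - pm - ρm * vm ^ 2) →
      ρm * (pp - pm) / (pp - pm - ρm * vm ^ 2) < ρ2 →
        0 < (ρ2 - ρ1) * (ρ1 - ρm) * ((ρ2 - ρm) * (pp - pm) - ρm * ρ2 * vm ^ 2) ∧
        ρm * (ρ2 - ρ1) * vm / (ρ1 * (ρ2 - ρm))
            - Real.sqrt ((ρ2 - ρ1) * (ρ1 - ρm)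
                * ((ρ2 - ρm) * (pp - pm) - ρm * ρ2 * vm ^ 2)) / (ρ1 * (ρ2 - ρm))
          < vm := by
  have hden : 0 < (2 * cv + 1) * pp + pm := by nlinarith
  have h1 : ρm * vm ^ 2 < pp - pm := by
    have h2 : 2 * cv * (pp - pm) ^ 2 / ((2 * cv + 1) * pp + pm) < pp - pm := by
      rw [div_lt_iff₀ hden]
      nlinarith [mul_pos (sub_pos.mpr hpmp) (show (0:ℝ) < pp + pm + 2 * cv * pm by nlinarith)]
    linarith
  have hD : 0 < pp - pm - ρm * vm ^ 2 := by linarith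
  have hv2 : 0 < ρm * vm ^ 2 := by positivity
  have hK : ρm < ρm * (pp - pm) / (pp - pm - ρm * vm ^ 2) := by
    rw [lt_div_iff₀ hD]; nlinarith
  refine ⟨h1, hK, fun ρ1 ρ2 h1m h1K hK2 => ?_⟩
  have hρ2 : 0 < ρ2 := by linarith
  have hK2' : ρm * (pp - pm) < ρ2 * (pp - pm - ρm * vm ^ 2) := by
    rwa [div_lt_iff₀ hD] at hK2
  have hf : 0 < (ρ2 - ρm) * (pp - pm) - ρm * ρ2 * vm ^ 2 := by nlinarith
  have h21 : ρ1 < ρ2 := by linarith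
  have hdisc : 0 < (ρ2 - ρ1) * (ρ1 - ρm) * ((ρ2 - ρm) * (pp - pm) - ρm * ρ2 * vm ^ 2) := by
    apply mul_pos (mul_pos (by linarith) (by linarith)) hf
  refine ⟨hdisc, ?_⟩
  have hA : 0 < ρ1 * (ρ2 - ρm) := mul_pos (by linarith) (by linarith)
  have hfirst : ρm * (ρ2 - ρ1) * vm / (ρ1 * (ρ2 - ρm)) < vm := by
    rw [div_lt_iff₀ hA]
    nlinarith [mul_pos hvm (mul_pos hρ2 (sub_pos.mpr h1m))]
  have hs : 0 ≤ Real.sqrt ((ρ2 - ρ1) * (ρ1 - ρm)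
      * ((ρ2 - ρm) * (pp - pm) - ρm * ρ2 * vm ^ 2)) / (ρ1 * (ρ2 - ρm)) :=
    div_nonneg (Real.sqrt_nonneg _) hA.le
  linarith
end

section
/- Let c_v > 1/2, ρ₋ > 0, 0 < p₋ < p₊ and v₋ > 0 satisfy ρ₋v₋² < 2c_v(p₊−p₋)²/((2c_v+1)p₊ + p₋), set ρ_K := ρ₋(p₊−p₋)/(p₊−p₋−ρ₋v₋²), let ρ₋ < ρ₁ < ρ_K < ρ₂ and p₁, p₂ > 0, and define β := (ρ₋(ρ₂−ρ₁)v₋)/(ρ₁(ρ₂−ρ₋)) − √((ρ₂−ρ₁)(ρ₁−ρ₋)[(ρ₂−ρ₋)(p₊−p₋)−ρ₋ρ₂v₋²])/(ρ₁(ρ₂−ρ₋)), μ₀ := (ρ₁β−ρ₋v₋)/(ρ₁−ρ₋), μ₁ := −ρ₁β/(ρ₂−ρ₁), ε₁ := (1/ρ₁)(p₋ − p₁ + ρ₁ρ₋(v₋−β)²/(ρ₁−ρ₋)), ε₂ := (p₊−p₂)/ρ₂, ε̃₁ := v₋² − β² − 2c_v(p₁/ρ₁ − p₋/ρ₋) −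 2(ρ₁−ρ₋)(p₁β−p₋v₋)/(ρ₋ρ₁(v₋−β)) + (p₁−p₋)/ρ₁ − ρ₋(v₋−β)²/(ρ₁−ρ₋), ε̃₂ := v₋² − 2c_v(p₂/ρ₂ − p₋/ρ₋) − 2(ρ₁−ρ₋)(p₁β−p₋v₋)/(ρ₋ρ₁(v₋−β)) + (p₂−p₊)/ρ₂ + 2(ρ₂−ρ₁)p₁/(ρ₁ρ₂). Then the following seven equations hold: (1) μ₀(ρ₋−ρ₁) = ρ₋v₋ − ρ₁β; (2) μ₀(ρ₋v₋ − ρ₁β) = ρ₋v₋² − ρ₁(β²+ε₁) + p₋ − p₁; (3) μ₀(½ρ₋v₋² + c_v p₋ − ½ρ₁(β²+ε₁+ε̃₁) − c_v p₁) = (½ρ₋v₋² + (c_v+1)p₋)v₋ − (½ρ₁(β²+ε₁+ε̃₁) + (c_v+1)p₁)β; (4) μ₁(ρ₁−ρ₂) = ρ₁β; (5) μ₁ρ₁β = ρ₁(β²+ε₁) − ρ₂ε₂ + p₁ − p₂; (6) μ₁(½ρ₁(β²+ε₁+ε̃₁) + c_v p₁ − ½ρ₂(ε₂+ε̃₂)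 − c_v p₂) = (½ρ₁(β²+ε₁+ε̃₁) + (c_v+1)p₁)β; (7) 0 = ρ₂ε₂ + p₂ − p₊. -/
set_option maxHeartbeats 4000000


/-- The particular fan subsolution quantities solve the seven Rankine–Hugoniot type
equations (Section 3.4 of the paper). -/
theorem particular_subsolution_equations
    (cv ρm pm pp vm ρ1 ρ2 p1 p2 : ℝ)
    (hcv : 1 / 2 < cv) (hρm : 0 < ρm) (hpm : 0 < pm) (hpmp : pm < pp) (hvm : 0 < vm)
    (hmain : ρm * vm ^ 2 < 2 * cv * (pp - pm) ^ 2 / ((2 * cv + 1) * pp + pm))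
    (hρ1l : ρm < ρ1) (hρ1u : ρ1 < ρm * (pp - pm) / (pp - pm - ρm * vm ^ 2))
    (hρ2 : ρm * (pp - pm) / (pp - pm - ρm * vm ^ 2) < ρ2)
    (hp1 : 0 < p1) (hp2 : 0 < p2)
    (β μ0 μ1 ε1 ε2 εt1 εt2 : ℝ)
    (hβ : β = ρm * (ρ2 - ρ1) * vm / (ρ1 * (ρ2 - ρm))
      - Real.sqrt ((ρ2 - ρ1) * (ρ1 - ρm)
          * ((ρ2 - ρm) * (pp - pm) - ρm * ρ2 * vm ^ 2)) / (ρ1 * (ρ2 - ρm)))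
    (hμ0 : μ0 = (ρ1 * β - ρm * vm) / (ρ1 - ρm))
    (hμ1 : μ1 = -(ρ1 * β) / (ρ2 - ρ1))
    (hε1 : ε1 = (1 / ρ1) * (pm - p1 + ρ1 * ρm / (ρ1 - ρm) * (vm - β) ^ 2))
    (hε2 : ε2 = (pp - p2) / ρ2)
    (hεt1 : εt1 = vm ^ 2 - β ^ 2 - 2 * cv * (p1 / ρ1 - pm / ρm)
      - 2 * ((ρ1 - ρm) * (p1 * β - pm * vm)) / (ρm * ρ1 * (vm - β))
      + (p1 - pm) / ρ1 - ρm * (vm - β) ^ 2 / (ρ1 - ρm))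
    (hεt2 : εt2 = vm ^ 2 - 2 * cv * (p2 / ρ2 - pm / ρm)
      - 2 * ((ρ1 - ρm) * (p1 * β - pm * vm)) / (ρm * ρ1 * (vm - β))
      + (p2 - pp) / ρ2 + 2 * (ρ2 - ρ1) / (ρ1 * ρ2) * p1) :
    μ0 * (ρm - ρ1) = ρm * vm - ρ1 * β ∧
    μ0 * (ρm * vm - ρ1 * β) = ρm * vm ^ 2 - ρ1 * (β ^ 2 + ε1) + pm - p1 ∧
    μ0 * (1 / 2 * ρm * vm ^ 2 + cv * pm - 1 / 2 * ρ1 * (β ^ 2 + ε1 + εt1) - cv * p1)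
      = (1 / 2 * ρm * vm ^ 2 + (cv + 1) * pm) * vm
        - (1 / 2 * ρ1 * (β ^ 2 + ε1 + εt1) + (cv + 1) * p1) * β ∧
    μ1 * (ρ1 - ρ2) = ρ1 * β ∧
    μ1 * (ρ1 * β) = ρ1 * (β ^ 2 + ε1) - ρ2 * ε2 + p1 - p2 ∧
    μ1 * (1 / 2 * ρ1 * (β ^ 2 + ε1 + εt1) + cv * p1 - 1 / 2 * ρ2 * (ε2 + εt2) - cv * p2)
      = (1 / 2 * ρ1 * (β ^ 2 + ε1 + εt1) + (cv + 1) * p1) * β ∧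
    0 = ρ2 * ε2 + p2 - pp := by
  have hρ1 : 0 < ρ1 := hρm.trans hρ1l
  have h21 : ρ1 < ρ2 := hρ1u.trans hρ2
  have h2m : ρm < ρ2 := hρ1l.trans h21
  have hρ2pos : 0 < ρ2 := hρm.trans h2m
  have h1m : ρ1 - ρm ≠ 0 := sub_ne_zero.2 (ne_of_gt hρ1l)
  have h21ne : ρ2 - ρ1 ≠ 0 := sub_ne_zero.2 (ne_of_gt h21)
  have h2mne : ρ2 - ρm ≠ 0 := sub_ne_zero.2 (ne_of_gt h2m)
  have hd : 0 < (2 * cv + 1) * pp + pm := by nlinarith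
  have hmain' : ρm * vm ^ 2 * ((2 * cv + 1) * pp + pm) < 2 * cv * (pp - pm) ^ 2 :=
    (lt_div_iff₀ hd).1 hmain
  have e1 : 0 < (pp - pm) * (((2 * cv + 1) * pp + pm) - 2 * cv * (pp - pm)) :=
    mul_pos (sub_pos.2 hpmp) (by nlinarith)
  have hsub : 0 < pp - pm - ρm * vm ^ 2 := by nlinarith [hmain', e1, hd]
  have hρ2' : ρm * (pp - pm) < ρ2 * (pp - pm - ρm * vm ^ 2) := (div_lt_iff₀ hsub).1 hρ2
  have h3 : 0 < (ρ2 - ρm) * (pp - pm) - ρm * ρ2 * vm ^ 2 := by nlinarith [hρ2']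
  have hS : 0 < (ρ2 - ρ1) * (ρ1 - ρm) * ((ρ2 - ρm) * (pp - pm) - ρm * ρ2 * vm ^ 2) :=
    mul_pos (mul_pos (sub_pos.2 h21) (sub_pos.2 hρ1l)) h3
  set s := Real.sqrt ((ρ2 - ρ1) * (ρ1 - ρm) * ((ρ2 - ρm) * (pp - pm) - ρm * ρ2 * vm ^ 2)) with hsdef
  have hs2 : s ^ 2 = (ρ2 - ρ1) * (ρ1 - ρm) * ((ρ2 - ρm) * (pp - pm) - ρm * ρ2 * vm ^ 2) :=
    Real.sq_sqrt hS.le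
  have hsnn : 0 ≤ s := Real.sqrt_nonneg _
  have hD : ρ1 * (ρ2 - ρm) ≠ 0 := mul_ne_zero hρ1.ne' h2mne
  have hsβ : ρ1 * (ρ2 - ρm) * β = ρm * (ρ2 - ρ1) * vm - s := by
    rw [hβ]; field_simp
  have hQ : (ρm * (ρ2 - ρ1) * vm - ρ1 * (ρ2 - ρm) * β) ^ 2
      = (ρ2 - ρ1) * (ρ1 - ρm) * ((ρ2 - ρm) * (pp - pm) - ρm * ρ2 * vm ^ 2) := by
    have h : ρm * (ρ2 - ρ1) * vm - ρ1 * (ρ2 - ρm) * β = s := by linarith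
    rw [h, hs2]
  have hE5 : ρ1 * ρ2 * (ρ1 - ρm) * β ^ 2 + ρ1 * ρm * (ρ2 - ρ1) * (vm - β) ^ 2
      = (pp - pm) * (ρ2 - ρ1) * (ρ1 - ρm) := by
    apply mul_left_cancel₀ h2mne
    linear_combination hQ
  have hβvm : β < vm := by
    nlinarith [mul_pos hρ1 (sub_pos.2 h2m), mul_pos (mul_pos hρ2pos (sub_pos.2 hρ1l)) hvm]
  have hvmβ : vm - β ≠ 0 := sub_ne_zero.2 (ne_of_gt hβvm)
  clear_value s
  clear hβ hsdef hs2 hsnn hsβ hQ hmain hmain' hρ1u hρ2 e1 hS h3 hρ2' hsub hd hβvm s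
  refine ⟨?_, ?_, ?_, ?_, ?_, ?_, ?_⟩
  · rw [hμ0]; field_simp; ring
  · rw [hμ0, hε1]; field_simp; ring
  · rw [hμ0, hε1, hεt1]; field_simp; ring
  · rw [hμ1]; field_simp; ring
  · rw [hμ1, hε1, hε2]; field_simp; linear_combination -hE5
  · rw [hμ1, hε1, hε2, hεt1, hεt2]; field_simp; ring
  · rw [hε2]; field_simp; ring
end

section
/- Let c_v > 1/2, ρ₋ > 0, 0 < p₋ < p₊ and v₋ > 0 satisfy ρ₋v₋² < 2c_v(p₊−p₋)²/((2c_v+1)p₊ + p₋), set ρ_K := ρ₋(p₊−p₋)/(p₊−p₋−ρ₋v₋²), let ρ₋ < ρ₁ < ρ_K < ρ₂, and define β := (ρ₋(ρ₂−ρ₁)v₋)/(ρ₁(ρ₂−ρ₋)) − √((ρ₂−ρ₁)(ρ₁−ρ₋)[(ρ₂−ρ₋)(p₊−p₋)−ρ₋ρ₂v₋²])/(ρ₁(ρ₂−ρ₋)), μ₀ := (ρ₁β−ρ₋v₋)/(ρ₁−ρ₋), μ₁ := −ρ₁β/(ρ₂−ρ₁). Then β > 0 and μ₀ < μ₁ <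 0. -/
/-- Order of the speeds: `β > 0` and `μ₀ < μ₁ < 0` (Section 3.5 of the paper). -/
theorem order_of_speeds
    (cv ρm pm pp vm ρ1 ρ2 : ℝ)
    (hcv : 1 / 2 < cv) (hρm : 0 < ρm) (hpm : 0 < pm) (hpmp : pm < pp) (hvm : 0 < vm)
    (hmain : ρm * vm ^ 2 < 2 * cv * (pp - pm) ^ 2 / ((2 * cv + 1) * pp + pm))
    (hρ1l : ρm < ρ1) (hρ1u : ρ1 < ρm * (pp - pm) / (pp - pm - ρm * vm ^ 2))
    (hρ2 : ρm * (pp - pm) / (pp - pm - ρm * vm ^ 2) < ρ2)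
    (β μ0 μ1 : ℝ)
    (hβ : β = ρm * (ρ2 - ρ1) * vm / (ρ1 * (ρ2 - ρm))
      - Real.sqrt ((ρ2 - ρ1) * (ρ1 - ρm)
          * ((ρ2 - ρm) * (pp - pm) - ρm * ρ2 * vm ^ 2)) / (ρ1 * (ρ2 - ρm)))
    (hμ0 : μ0 = (ρ1 * β - ρm * vm) / (ρ1 - ρm))
    (hμ1 : μ1 = -(ρ1 * β) / (ρ2 - ρ1)) :
    0 < β ∧ μ0 < μ1 ∧ μ1 < 0 := by
  have hD : 0 < pp - pm := by linarith
  have hden : 0 < (2 * cv + 1) * pp + pm := by nlinarith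
  have hDv : 0 < pp - pm - ρm * vm ^ 2 := by
    have h1 : 2 * cv * (pp - pm) ^ 2 / ((2 * cv + 1) * pp + pm) < pp - pm := by
      rw [div_lt_iff₀ hden]
      nlinarith [mul_pos hD (show 0 < pp + pm + 2 * cv * pm by nlinarith)]
    linarith
  have h1 : ρ1 * (pp - pm - ρm * vm ^ 2) < ρm * (pp - pm) := by
    rw [lt_div_iff₀ hDv] at hρ1u; linarith
  have h2 : ρm * (pp - pm) < ρ2 * (pp - pm - ρm * vm ^ 2) := by
    rw [div_lt_iff₀ hDv] at hρ2; linarith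
  have h12 : ρ1 < ρ2 := by nlinarith
  have hinner : 0 < (ρ2 - ρm) * (pp - pm) - ρm * ρ2 * vm ^ 2 := by nlinarith
  have hE : 0 < (ρ2 - ρ1) * (ρ1 - ρm) * ((ρ2 - ρm) * (pp - pm) - ρm * ρ2 * vm ^ 2) := by
    have : 0 < ρ2 - ρ1 := by linarith
    have : 0 < ρ1 - ρm := by linarith
    positivity
  have hNpos : 0 < ρm * (ρ2 - ρ1) * vm := by
    have : 0 < ρ2 - ρ1 := by linarith
    positivity
  have hsq : Real.sqrt ((ρ2 - ρ1) * (ρ1 - ρm) * ((ρ2 - ρm) * (pp - pm) - ρm * ρ2 * vm ^ 2))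
      < ρm * (ρ2 - ρ1) * vm := by
    rw [Real.sqrt_lt' hNpos]
    have hb : (0:ℝ) < ρ1 * ρm * vm ^ 2 - (ρ1 - ρm) * (pp - pm) := by nlinarith
    have hX := mul_pos (mul_pos (show (0:ℝ) < ρ2 - ρ1 by linarith)
      (show (0:ℝ) < ρ2 - ρm by linarith)) hb
    have hid : (ρm * (ρ2 - ρ1) * vm) ^ 2
        = (ρ2 - ρ1) * (ρ1 - ρm) * ((ρ2 - ρm) * (pp - pm) - ρm * ρ2 * vm ^ 2)
          + (ρ2 - ρ1) * (ρ2 - ρm) * (ρ1 * ρm * vm ^ 2 - (ρ1 - ρm) * (pp - pm)) := by ring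
    linarith
  have hsnn : 0 < Real.sqrt ((ρ2 - ρ1) * (ρ1 - ρm) * ((ρ2 - ρm) * (pp - pm) - ρm * ρ2 * vm ^ 2)) :=
    Real.sqrt_pos.2 hE
  have hdenpos : 0 < ρ1 * (ρ2 - ρm) :=
    mul_pos (by linarith) (by linarith)
  have hβ' : β = (ρm * (ρ2 - ρ1) * vm
      - Real.sqrt ((ρ2 - ρ1) * (ρ1 - ρm) * ((ρ2 - ρm) * (pp - pm) - ρm * ρ2 * vm ^ 2)))
      / (ρ1 * (ρ2 - ρm)) := by rw [hβ]; ring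
  have hβpos : 0 < β := by
    rw [hβ']
    exact div_pos (by linarith) hdenpos
  have hkey : ρ1 * (ρ2 - ρm) * β < ρm * (ρ2 - ρ1) * vm := by
    rw [hβ', mul_div_cancel₀ _ (ne_of_gt hdenpos)]
    linarith
  refine ⟨hβpos, ?_, ?_⟩
  · rw [hμ0, hμ1, div_lt_div_iff₀ (by linarith) (by linarith)]
    linarith [hkey]
  · rw [hμ1]
    apply div_neg_of_neg_of_pos
    · exact neg_lt_zero.2 (mul_pos (by linarith) hβpos)
    · linarith
end

section
/- Let c_v > 1/2, ρ₋ > 0, 0 < p₋ < p₊ and v₋ > 0 satisfy ρ₋v₋² < 2c_v(p₊−p₋)²/((2c_v+1)p₊ + p₋), and set ρ_K := ρ₋(p₊−p₋)/(p₊−p₋−ρ₋v₋²). Then p₊ > p₋·(ρ_K/ρ₋)^{(c_v+1)/c_v}. (In particular, p₊ − p₋·(ρ_K/ρ₋)^{(c_v+1)/c_v} > p₋·f(p₊/p₋) where f(t) = t − (((2c_v+1)t+1)/((2c_v+1)+t))^{(c_v+1)/c_v}.) -/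
open Set

lemma padekey (α : ℝ) (hα0 : 0 < α) (hα1 : α < 1) {t : ℝ} (ht : 1 ≤ t) :
    (1 + α) * t + (1 - α) ≤ t ^ α * ((1 - α) * t + (1 + α)) := by
  set F : ℝ → ℝ := fun x => (1 - α) * x ^ (1 + α) + (1 + α) * x ^ α - (1 + α) * x with hF
  have ht0 : (0:ℝ) < t := lt_of_lt_of_le one_pos ht
  have hder : ∀ x ∈ Ioi (0:ℝ), HasDerivAt F
      ((1 + α) * ((1 - α) * x ^ α + α * x ^ (α - 1) - 1)) x := by
    intro x hx
    have hx0 : x ≠ 0 := ne_of_gt hx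
    have h1 : HasDerivAt (fun x : ℝ => x ^ (1 + α)) ((1 + α) * x ^ (1 + α - 1)) x :=
      Real.hasDerivAt_rpow_const (Or.inl hx0)
    have h2 : HasDerivAt (fun x : ℝ => x ^ α) (α * x ^ (α - 1)) x :=
      Real.hasDerivAt_rpow_const (Or.inl hx0)
    have h3 : HasDerivAt (fun x : ℝ => (1 + α) * x) (1 + α) x := by
      simpa using (hasDerivAt_id x).const_mul (1 + α)
    have := ((h1.const_mul (1 - α)).add (h2.const_mul (1 + α))).sub h3
    refine this.congr_deriv ?_
    have : 1 + α - 1 = α := by ring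
    rw [this]; ring
  have hmono : MonotoneOn F (Ici (1:ℝ)) := by
    apply monotoneOn_of_deriv_nonneg (convex_Ici 1)
    · have : DifferentiableOn ℝ F (Ioi 0) := fun x hx => ((hder x hx).differentiableAt).differentiableWithinAt
      exact this.continuousOn.mono (fun x hx => mem_Ioi.2 (lt_of_lt_of_le one_pos hx))
    · rw [interior_Ici]
      intro x hx
      exact ((hder x (mem_Ioi.2 (lt_trans one_pos hx))).differentiableAt).differentiableWithinAt
    · rw [interior_Ici]
      intro x hx
      have hx0 : (0:ℝ) < x := lt_trans one_pos hx
      rw [(hder x hx0).deriv]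
      have hamgm : (x ^ α) ^ (1 - α) * (x ^ (α - 1)) ^ α ≤ (1 - α) * x ^ α + α * x ^ (α - 1) :=
        Real.geom_mean_le_arith_mean2_weighted (by linarith) hα0.le
          (Real.rpow_nonneg hx0.le _) (Real.rpow_nonneg hx0.le _) (by ring)
      have heq : (x ^ α) ^ (1 - α) * (x ^ (α - 1)) ^ α = 1 := by
        rw [← Real.rpow_mul hx0.le, ← Real.rpow_mul hx0.le, ← Real.rpow_add hx0]
        have : α * (1 - α) + (α - 1) * α = 0 := by ring
        rw [this, Real.rpow_zero]
      rw [heq] at hamgm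
      nlinarith
  have h1 : F 1 ≤ F t := hmono (by simp) ht ht
  have hF1 : F 1 = 1 - α := by simp [hF]
  have hFt : F t = (1 - α) * t ^ (1 + α) + (1 + α) * t ^ α - (1 + α) * t := rfl
  have hsplit : t ^ (1 + α) = t * t ^ α := by
    rw [Real.rpow_add ht0, Real.rpow_one]
  rw [hFt, hsplit, hF1] at h1
  nlinarith [h1]

/-- `p₊ > p₋ (ρ_K/ρ₋)^{(c_v+1)/c_v}`, in fact `p₊ - p₋ (ρ_K/ρ₋)^{(c_v+1)/c_v} > p₋ f(p₊/p₋)`. -/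
theorem pressure_at_rhoK
    (cv ρm pm pp vm ρK : ℝ)
    (hcv : 1 / 2 < cv) (hρm : 0 < ρm) (hpm : 0 < pm) (hpmp : pm < pp) (hvm : 0 < vm)
    (hmain : ρm * vm ^ 2 < 2 * cv * (pp - pm) ^ 2 / ((2 * cv + 1) * pp + pm))
    (hρK : ρK = ρm * (pp - pm) / (pp - pm - ρm * vm ^ 2)) :
    pm * (ρK / ρm) ^ ((cv + 1) / cv) < pp ∧
    pm * (pp / pm
        - (((2 * cv + 1) * (pp / pm) + 1) / ((2 * cv + 1) + pp / pm)) ^ ((cv + 1) / cv))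
      < pp - pm * (ρK / ρm) ^ ((cv + 1) / cv) := by
  have hcv0 : (0:ℝ) < cv := by linarith
  have hcv1 : (0:ℝ) < cv + 1 := by linarith
  set t : ℝ := pp / pm with hts
  have ht : 1 < t := (one_lt_div hpm).2 hpmp
  have ht0 : (0:ℝ) < t := by linarith
  have hpt : pm * t = pp := by rw [hts]; field_simp
  set α : ℝ := cv / (cv + 1) with hαdef
  have hα0 : 0 < α := div_pos hcv0 hcv1
  have hα1 : α < 1 := (div_lt_one hcv1).2 (by linarith)
  set e : ℝ := (cv + 1) / cv with hedef
  have he : 0 < e := div_pos hcv1 hcv0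
  have hαe : α * e = 1 := by rw [hαdef, hedef]; field_simp
  -- Q : positive denominators
  have hQ : (0:ℝ) < (2 * cv + 1) * pp + pm := by nlinarith
  have hmain' : ρm * vm ^ 2 * ((2 * cv + 1) * pp + pm) < 2 * cv * (pp - pm) ^ 2 :=
    (lt_div_iff₀ hQ).1 hmain
  have h2cv : 2 * cv * (pp - pm) < (2 * cv + 1) * pp + pm := by nlinarith
  have hd : 0 < pp - pm - ρm * vm ^ 2 := by
    nlinarith [hmain', mul_lt_mul_of_pos_right h2cv (show (0:ℝ) < pp - pm by linarith), hQ]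
  -- identities relating α-form and cv-form
  have h1 : (1 + α) * (cv + 1) = 2 * cv + 1 := by rw [hαdef, add_mul, one_mul, div_mul_cancel₀ _ hcv1.ne']; ring
  have h2 : (1 - α) * (cv + 1) = 1 := by rw [hαdef, sub_mul, one_mul, div_mul_cancel₀ _ hcv1.ne']; ring
  -- s ≤ t^α
  have hdent : (0:ℝ) < (2 * cv + 1) + t := by nlinarith
  set s : ℝ := ((2 * cv + 1) * t + 1) / ((2 * cv + 1) + t) with hsdef
  clear_value t α e s
  have hs_pos : 0 < s := by
    rw [hsdef]
    exact div_pos (by nlinarith [mul_pos (show (0:ℝ) < 2 * cv + 1 by linarith) ht0]) hdent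
  have hs_le : s ≤ t ^ α := by
    rw [hsdef, div_le_iff₀ hdent]
    have hkey := padekey α hα0 hα1 ht.le
    calc (2 * cv + 1) * t + 1 = ((1 + α) * t + (1 - α)) * (cv + 1) := by
          linear_combination (-t) * h1 - h2
      _ ≤ (t ^ α * ((1 - α) * t + (1 + α))) * (cv + 1) :=
          mul_le_mul_of_nonneg_right hkey hcv1.le
      _ = t ^ α * ((2 * cv + 1) + t) := by
          linear_combination (t ^ α * t) * h2 + (t ^ α) * h1
  have hBt : s ^ e ≤ t := by
    have h := Real.rpow_le_rpow hs_pos.le hs_le he.le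
    rwa [← Real.rpow_mul ht0.le, hαe, Real.rpow_one] at h
  have hr_eq : ρK / ρm = (pp - pm) / (pp - pm - ρm * vm ^ 2) := by
    rw [hρK]; field_simp
  have hr_pos : 0 < ρK / ρm := hr_eq ▸ div_pos (by linarith) hd
  have hden2 : (0:ℝ) < pp + (2 * cv + 1) * pm := by
    have := mul_pos (show (0:ℝ) < 2 * cv + 1 by linarith) hpm
    linarith
  have hs2 : s = ((2 * cv + 1) * pp + pm) / (pp + (2 * cv + 1) * pm) := by
    rw [hsdef, hts, div_eq_div_iff (show (2*cv+1+pp/pm) ≠ 0 by rw [← hts]; exact hdent.ne') hden2.ne']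
    field_simp
    ring_nf
  have hrs : ρK / ρm < s := by
    rw [hr_eq, hs2, div_lt_div_iff₀ hd hden2]
    linarith [hmain']
  have hAB : (ρK / ρm) ^ e < s ^ e := Real.rpow_lt_rpow hr_pos.le hrs he
  have hAt : (ρK / ρm) ^ e < t := lt_of_lt_of_le hAB hBt
  constructor
  · calc pm * (ρK / ρm) ^ e < pm * t := mul_lt_mul_of_pos_left hAt hpm
      _ = pp := hpt
  · have hAB' : pm * (ρK / ρm) ^ e < pm * s ^ e := mul_lt_mul_of_pos_left hAB hpm
    rw [mul_sub]
    linarith [hAB', hpt]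
end

section
/- Let c_v > 1/2, ρ₋ > 0, 0 < p₋ < p₊ and v₋ > 0 satisfy ρ₋v₋² < 2c_v(p₊−p₋)²/((2c_v+1)p₊ + p₋), and set ρ_K := ρ₋(p₊−p₋)/(p₊−p₋−ρ₋v₋²). For ρ₋ < ρ₁ < ρ_K < ρ₂ define β := (ρ₋(ρ₂−ρ₁)v₋)/(ρ₁(ρ₂−ρ₋)) − √((ρ₂−ρ₁)(ρ₁−ρ₋)[(ρ₂−ρ₋)(p₊−p₋)−ρ₋ρ₂v₋²])/(ρ₁(ρ₂−ρ₋)), p₁ := p₋(ρ₁/ρ₋)^{(c_v+1)/c_v}, p₂ := p₋(ρ₂/ρ₋)^{(c_v+1)/c_v}, ε₁ := (1/ρ₁)(p₋ − p₁ + ρ₁ρ₋(v₋−β)²/(ρ₁−ρ₋)), ε₂ := (p₊−p₂)/ρ₂. Then there exists δ > 0 with ρ_K − δ > ρ₋ such that for all ρ₁ ∈ (ρ_K−δ, ρ_K) and all ρ₂ ∈ (ρ_K, ρ_K+δ), both ε₁ > 0 and ε₂ > 0. -/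
/-- The second velocity component `β` of the subsolution in region `Ω₁`. -/
noncomputable def betaDef (ρm pm pp vm ρ1 ρ2 : ℝ) : ℝ :=
  ρm * (ρ2 - ρ1) * vm / (ρ1 * (ρ2 - ρm))
    - Real.sqrt ((ρ2 - ρ1) * (ρ1 - ρm)
        * ((ρ2 - ρm) * (pp - pm) - ρm * ρ2 * vm ^ 2)) / (ρ1 * (ρ2 - ρm))


open Real

lemma keylog {μ : ℝ} (hμ : 1 < μ) {x : ℝ} (hx : 1 < x) :
    (μ + 1) * (Real.log (μ * x + 1) - Real.log (x + μ)) < (μ - 1) * Real.log x := by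
  set f : ℝ → ℝ := fun y => (μ - 1) * Real.log y
      - (μ + 1) * (Real.log (μ * y + 1) - Real.log (y + μ)) with hf
  have hderiv : ∀ y : ℝ, 0 < y → HasDerivAt f
      ((μ - 1) * y⁻¹ - (μ + 1) * (μ / (μ * y + 1) - 1 / (y + μ))) y := by
    intro y hy
    have h1num : HasDerivAt (fun y : ℝ => μ * y + 1) μ y := by
      simpa using ((hasDerivAt_id y).const_mul μ).add_const 1
    have h1 : HasDerivAt (fun y : ℝ => Real.log (μ * y + 1)) (μ / (μ * y + 1)) y :=
      h1num.log (by nlinarith)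
    have h2num : HasDerivAt (fun y : ℝ => y + μ) 1 y := (hasDerivAt_id y).add_const μ
    have h2 : HasDerivAt (fun y : ℝ => Real.log (y + μ)) (1 / (y + μ)) y :=
      h2num.log (by nlinarith)
    exact ((Real.hasDerivAt_log (ne_of_gt hy)).const_mul (μ - 1)).sub
      ((h1.sub h2).const_mul (μ + 1))
  have hmono : StrictMonoOn f (Set.Ici 1) := by
    apply strictMonoOn_of_deriv_pos (convex_Ici 1)
    · intro y hy
      have hy0 : (0 : ℝ) < y := lt_of_lt_of_le one_pos hy
      exact ((hderiv y hy0).continuousAt).continuousWithinAt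
    · intro y hy
      rw [interior_Ici] at hy
      have hy1 : (1 : ℝ) < y := hy
      have hy0 : (0 : ℝ) < y := by linarith
      rw [(hderiv y hy0).deriv]
      have heq : (μ - 1) * y⁻¹ - (μ + 1) * (μ / (μ * y + 1) - 1 / (y + μ))
          = μ * (μ - 1) * (y - 1) ^ 2 / (y * (μ * y + 1) * (y + μ)) := by
        field_simp
        ring
      rw [heq]
      have h1 : (0:ℝ) < μ * y + 1 := by nlinarith
      have h2 : (0:ℝ) < y + μ := by linarith
      have h3 : (0:ℝ) < (y - 1)^2 := pow_pos (by linarith) 2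
      have h4 : (0:ℝ) < μ * (μ - 1) := by nlinarith
      exact div_pos (mul_pos h4 h3) (by positivity)
  have h0 : f 1 = 0 := by
    simp [hf, add_comm]
  have := hmono (Set.self_mem_Ici) (Set.mem_Ici.mpr hx.le) hx
  rw [h0] at this
  simp only [hf] at this
  linarith

lemma keyB {cv x : ℝ} (hcv : 1 / 2 < cv) (hx : 1 < x) :
    (((2 * cv + 1) * x + 1) / (x + (2 * cv + 1))) ^ ((cv + 1) / cv) < x := by
  set μ : ℝ := 2 * cv + 1 with hμdef
  have hcv0 : 0 < cv := by linarith
  have hμ : 1 < μ := by simp [hμdef]; linarith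
  have hexp : (cv + 1) / cv = (μ + 1) / (μ - 1) := by
    rw [hμdef]
    field_simp
    ring
  have hnum : (0:ℝ) < μ * x + 1 := by nlinarith
  have hden : (0:ℝ) < x + μ := by nlinarith
  have hB : (0:ℝ) < (μ * x + 1) / (x + μ) := div_pos hnum hden
  rw [hexp, Real.rpow_def_of_pos hB, mul_comm]
  have hlog : Real.log ((μ * x + 1) / (x + μ))
      = Real.log (μ * x + 1) - Real.log (x + μ) := Real.log_div (ne_of_gt hnum) (ne_of_gt hden)
  have hkl := keylog hμ hx
  have h1 : (μ + 1) / (μ - 1) * Real.log ((μ * x + 1) / (x + μ)) < Real.log x := by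
    rw [hlog, div_mul_eq_mul_div, div_lt_iff₀ (by linarith : (0:ℝ) < μ - 1)]
    linarith [hkl]
  calc Real.exp ((μ + 1) / (μ - 1) * Real.log ((μ * x + 1) / (x + μ)))
      < Real.exp (Real.log x) := Real.exp_lt_exp.mpr h1
    _ = x := Real.exp_log (by linarith)

set_option maxHeartbeats 1000000 in
/-- Subsolution condition, part 1. -/
theorem subsolution_condition_part1
    (cv ρm pm pp vm ρK : ℝ)
    (hcv : 1 / 2 < cv) (hρm : 0 < ρm) (hpm : 0 < pm) (hpmp : pm < pp) (hvm : 0 < vm)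
    (hmain : ρm * vm ^ 2 < 2 * cv * (pp - pm) ^ 2 / ((2 * cv + 1) * pp + pm))
    (hρK : ρK = ρm * (pp - pm) / (pp - pm - ρm * vm ^ 2)) :
    ∃ δ : ℝ, 0 < δ ∧ ρm < ρK - δ ∧
      ∀ ρ1 ρ2 : ℝ, ρK - δ < ρ1 → ρ1 < ρK → ρK < ρ2 → ρ2 < ρK + δ →
        0 < (1 / ρ1) * (pm - pm * (ρ1 / ρm) ^ ((cv + 1) / cv)
              + ρ1 * ρm * (vm - betaDef ρm pm pp vm ρ1 ρ2) ^ 2 / (ρ1 - ρm)) ∧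
        0 < (pp - pm * (ρ2 / ρm) ^ ((cv + 1) / cv)) / ρ2 := by
  have hcv0 : (0:ℝ) < cv := by linarith
  have ha : (0:ℝ) < pp - pm := by linarith
  have hN : (0:ℝ) < (2 * cv + 1) * pp + pm := by nlinarith
  have hsN : ρm * vm ^ 2 * ((2 * cv + 1) * pp + pm) < 2 * cv * (pp - pm) ^ 2 :=
    (lt_div_iff₀ hN).mp hmain
  have hpp : (0:ℝ) < pp := lt_trans hpm hpmp
  have h2cv : 2 * cv * (pp - pm) < (2 * cv + 1) * pp + pm := by nlinarith
  have h5 : ρm * vm ^ 2 * ((2 * cv + 1) * pp + pm)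
      < (pp - pm) * ((2 * cv + 1) * pp + pm) := by
    nlinarith [mul_lt_mul_of_pos_right h2cv ha]
  have has : (0:ℝ) < pp - pm - ρm * vm ^ 2 := by
    have := lt_of_mul_lt_mul_right h5 hN.le
    linarith
  have hρK_pos : (0:ℝ) < ρK := by rw [hρK]; positivity
  have hρKm : ρm < ρK := by
    rw [hρK, lt_div_iff₀ has]
    nlinarith [mul_pos hρm (mul_pos hρm (pow_pos hvm 2))]
  have hkey_id : ρK * (pp - pm - ρm * vm ^ 2) = ρm * (pp - pm) := by
    rw [hρK]; field_simp
  have hvmid : ρK * ρm * vm ^ 2 = (ρK - ρm) * (pp - pm) := by linarith [hkey_id]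
  have hx : (1:ℝ) < pp / pm := (one_lt_div hpm).mpr hpmp
  -- ρK/ρm < B
  have hr : ρK / ρm = (pp - pm) / (pp - pm - ρm * vm ^ 2) := by
    rw [hρK]; field_simp
  have hBeq : ((2 * cv + 1) * (pp / pm) + 1) / (pp / pm + (2 * cv + 1))
      = ((2 * cv + 1) * pp + pm) / (pp + (2 * cv + 1) * pm) := by
    rw [div_eq_div_iff (by positivity) (by nlinarith)]
    field_simp
    try ring
  have hrB : ρK / ρm < ((2 * cv + 1) * (pp / pm) + 1) / (pp / pm + (2 * cv + 1)) := by
    rw [hBeq, hr, div_lt_div_iff₀ has (by nlinarith)]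
    nlinarith [hsN]
  have hrpos : (0:ℝ) < ρK / ρm := by positivity
  have hγpos : (0:ℝ) < (cv + 1) / cv := by positivity
  have key : pm * (ρK / ρm) ^ ((cv + 1) / cv) < pp := by
    have h1 : (ρK / ρm) ^ ((cv + 1) / cv)
        < (((2 * cv + 1) * (pp / pm) + 1) / (pp / pm + (2 * cv + 1))) ^ ((cv + 1) / cv) :=
      Real.rpow_lt_rpow hrpos.le hrB hγpos
    have h2 := keyB hcv hx
    have h3 : (ρK / ρm) ^ ((cv + 1) / cv) < pp / pm := lt_trans h1 h2
    calc pm * (ρK / ρm) ^ ((cv + 1) / cv) < pm * (pp / pm) := by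
          exact (mul_lt_mul_iff_right₀ hpm).mpr h3
      _ = pp := by field_simp
  -- continuity of ε₁ as a function of (ρ1, ρ2)
  have hρKne : ρK ≠ 0 := ne_of_gt hρK_pos
  have hdenne : ρK * (ρK - ρm) ≠ 0 := by
    have : (0:ℝ) < ρK - ρm := by linarith
    positivity
  have hsubne : ρK - ρm ≠ 0 := sub_ne_zero.mpr (ne_of_gt hρKm)
  have hβc : ContinuousAt (fun q : ℝ × ℝ => betaDef ρm pm pp vm q.1 q.2) (ρK, ρK) := by
    unfold betaDef
    apply ContinuousAt.sub
    · exact ContinuousAt.div (by fun_prop) (by fun_prop) hdenne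
    · exact ContinuousAt.div
        ((Real.continuous_sqrt.continuousAt).comp (by fun_prop)) (by fun_prop) hdenne
  have hrpowne : ρK / ρm ≠ 0 := ne_of_gt hrpos
  have hFc : ContinuousAt (fun q : ℝ × ℝ =>
      (1 / q.1) * (pm - pm * (q.1 / ρm) ^ ((cv + 1) / cv)
        + q.1 * ρm * (vm - betaDef ρm pm pp vm q.1 q.2) ^ 2 / (q.1 - ρm))) (ρK, ρK) := by
    apply ContinuousAt.mul
    · exact ContinuousAt.div continuousAt_const continuousAt_fst hρKne
    · apply ContinuousAt.add
      · exact ContinuousAt.sub continuousAt_const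
          (continuousAt_const.mul
            ((continuousAt_fst.div_const ρm).rpow_const (Or.inl hrpowne)))
      · exact ContinuousAt.div
          (((continuousAt_fst.mul continuousAt_const).mul
            ((continuousAt_const.sub hβc).pow 2)))
          (continuousAt_fst.sub continuousAt_const) hsubne
  have hβ0 : betaDef ρm pm pp vm ρK ρK = 0 := by simp [betaDef]
  have hdivpp : ρK * ρm * vm ^ 2 / (ρK - ρm) = pp - pm := by
    rw [div_eq_iff hsubne]
    linarith [hvmid]
  have hF0 : (0:ℝ) < (1 / ρK) * (pm - pm * (ρK / ρm) ^ ((cv + 1) / cv)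
      + ρK * ρm * (vm - betaDef ρm pm pp vm ρK ρK) ^ 2 / (ρK - ρm)) := by
    rw [hβ0, sub_zero, hdivpp]
    have : (0:ℝ) < pm - pm * (ρK / ρm) ^ ((cv + 1) / cv) + (pp - pm) := by linarith [key]
    positivity
  have hGc : ContinuousAt (fun y : ℝ => (pp - pm * (y / ρm) ^ ((cv + 1) / cv)) / y) ρK := by
    apply ContinuousAt.div
    · exact ContinuousAt.sub continuousAt_const
        (continuousAt_const.mul ((continuousAt_id.div_const ρm).rpow_const (Or.inl hrpowne)))
    · exact continuousAt_id
    · exact hρKne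
  have hG0 : (0:ℝ) < (pp - pm * (ρK / ρm) ^ ((cv + 1) / cv)) / ρK :=
    div_pos (by linarith [key]) hρK_pos
  have hFev : ∀ᶠ q : ℝ × ℝ in nhds (ρK, ρK),
      0 < (1 / q.1) * (pm - pm * (q.1 / ρm) ^ ((cv + 1) / cv)
        + q.1 * ρm * (vm - betaDef ρm pm pp vm q.1 q.2) ^ 2 / (q.1 - ρm)) :=
    hFc.eventually (eventually_gt_nhds hF0)
  have hGev : ∀ᶠ y : ℝ in nhds ρK, 0 < (pp - pm * (y / ρm) ^ ((cv + 1) / cv)) / y :=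
    hGc.eventually (eventually_gt_nhds hG0)
  rw [Metric.eventually_nhds_iff] at hFev hGev
  obtain ⟨ε1, hε1, H1⟩ := hFev
  obtain ⟨ε2, hε2, H2⟩ := hGev
  refine ⟨min (min ε1 ε2) ((ρK - ρm) / 2), lt_min (lt_min hε1 hε2) (by linarith), by
    have := min_le_right (min ε1 ε2) ((ρK - ρm) / 2); linarith, ?_⟩
  intro ρ1 ρ2 h1a h1b h2a h2b
  have hδ1 : min (min ε1 ε2) ((ρK - ρm) / 2) ≤ ε1 :=
    le_trans (min_le_left _ _) (min_le_left _ _)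
  have hδ2 : min (min ε1 ε2) ((ρK - ρm) / 2) ≤ ε2 :=
    le_trans (min_le_left _ _) (min_le_right _ _)
  have hd1 : dist ρ1 ρK < ε1 := by
    rw [Real.dist_eq, abs_lt]; constructor <;> linarith
  have hd2 : dist ρ2 ρK < ε2 := by
    rw [Real.dist_eq, abs_lt]; constructor <;> linarith
  have hd2' : dist ρ2 ρK < ε1 := by
    rw [Real.dist_eq, abs_lt]; constructor <;> linarith
  constructor
  · exact H1 (show dist ((ρ1, ρ2) : ℝ × ℝ) (ρK, ρK) < ε1 by
      rw [Prod.dist_eq]; exact max_lt hd1 hd2')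
  · exact H2 hd2
end

section
/- Let c_v > 1/2, ρ₋ > 0, 0 < p₋ < p₊ and v₋ > 0 satisfy ρ₋v₋² < p₊ − p₋, set ρ_K := ρ₋(p₊−p₋)/(p₊−p₋−ρ₋v₋²) and p_K := p₋(ρ_K/ρ₋)^{(c_v+1)/c_v}, and define Ẽ₁ := v₋² − 2c_v(p_K/ρ_K − p₋/ρ₋) + 2(ρ_K−ρ₋)p₋/(ρ₋ρ_K) + (p_K−p₋)/ρ_K − ρ₋v₋²/(ρ_K−ρ₋) and Ẽ₂ := v₋² − 2c_v(p_K/ρ_K − p₋/ρ₋) + 2(ρ_K−ρ₋)p₋/(ρ₋ρ_K) + (p_K−p₊)/ρ_K. Then Ẽ₁ = Ẽ₂ = (p₋/ρ₋)·[(1−2c_v)·((p₊−p₋)/(p₊−p₋−ρ₋v₋²))^{1/c_v} + 2c_v + (ρ₋v₋²(p₋+2p₊) − p₊(p₊−p₋))/(p₋(p₊−p₋))]. -/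
/-- The quantities `Ẽ₁` and `Ẽ₂` coincide and equal the explicit expression in the proof
of the smallness theorem (Section 3.8 of the paper). -/
theorem Etilde_formula
    (cv ρm pm pp vm ρK pK Et1 Et2 : ℝ)
    (hcv : 1 / 2 < cv) (hρm : 0 < ρm) (hpm : 0 < pm) (hpmp : pm < pp) (hvm : 0 < vm)
    (hmain : ρm * vm ^ 2 < pp - pm)
    (hρK : ρK = ρm * (pp - pm) / (pp - pm - ρm * vm ^ 2))
    (hpK : pK = pm * (ρK / ρm) ^ ((cv + 1) / cv))
    (hEt1 : Et1 = vm ^ 2 - 2 * cv * (pK / ρK - pm / ρm)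
      + 2 * (ρK - ρm) * pm / (ρm * ρK) + (pK - pm) / ρK - ρm * vm ^ 2 / (ρK - ρm))
    (hEt2 : Et2 = vm ^ 2 - 2 * cv * (pK / ρK - pm / ρm)
      + 2 * (ρK - ρm) * pm / (ρm * ρK) + (pK - pp) / ρK) :
    Et1 = Et2 ∧
    Et1 = pm / ρm * ((1 - 2 * cv)
        * ((pp - pm) / (pp - pm - ρm * vm ^ 2)) ^ (1 / cv) + 2 * cv
        + (ρm * vm ^ 2 * (pm + 2 * pp) - pp * (pp - pm)) / (pm * (pp - pm))) := by
  have hD : 0 < pp - pm - ρm * vm ^ 2 := by linarith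
  have hA : 0 < pp - pm := by linarith
  have hcv0 : 0 < cv := by linarith
  have hratio : ρK / ρm = (pp - pm) / (pp - pm - ρm * vm ^ 2) := by
    rw [hρK]; field_simp
  have hsub : ρK - ρm = ρm * (ρm * vm ^ 2) / (pp - pm - ρm * vm ^ 2) := by
    rw [hρK]; field_simp; ring
  have hne : ρK - ρm ≠ 0 := by
    rw [hsub]; positivity
  set x := ((pp - pm) / (pp - pm - ρm * vm ^ 2)) ^ ((1:ℝ) / cv) with hx
  have hpK' : pK = pm * ((pp - pm) / (pp - pm - ρm * vm ^ 2)) * x := by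
    rw [hpK, hratio, show (cv + 1) / cv = 1 + 1 / cv by field_simp,
      Real.rpow_add (by positivity), Real.rpow_one, hx]; ring
  subst hpK' hEt1 hEt2
  subst hρK
  rw [hsub] at hne ⊢
  have hD' : pp - pm - vm ^ 2 * ρm ≠ 0 := by rw [mul_comm]; exact hD.ne'
  constructor <;> field_simp <;> ring
end

section
/- Let c_v > 1/2, ρ₋ > 0 and 0 < p₋ < p₊, and set W := 2c_v(p₊−p₋)²/((2c_v+1)p₊ + p₋). Define Ẽ := (p₋/ρ₋)·[(1−2c_v)·((p₊−p₋)/(p₊−p₋−W))^{1/c_v} + 2c_v + (W(p₋+2p₊) − p₊(p₊−p₋))/(p₋(p₊−p₋))]. Then Ẽ = (p₋(2c_v−1)((2c_v+1)p₋ + p₊))/(ρ₋((2c_v+1)p₊ + p₋)) · f(p₊/p₋), where f(t) = t − (((2c_v+1)t+1)/((2c_v+1)+t))^{(c_v+1)/c_v}, and consequently Ẽ > 0. -/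
lemma key_ineq (cv t : ℝ) (hcv : 1 / 2 < cv) (ht : 1 < t) :
    (((2 * cv + 1) * t + 1) / ((2 * cv + 1) + t)) ^ ((cv + 1) / cv) < t := by
  have hcv0 : 0 < cv := by linarith
  set a : ℝ := 2 * cv + 1 with ha
  have ha2 : 2 < a := by simp [ha]; linarith
  set F : ℝ → ℝ := fun x => cv * Real.log x - (cv + 1) * (Real.log (a * x + 1) - Real.log (a + x)) with hF
  have hderiv : ∀ x : ℝ, 1 ≤ x → HasDerivAt F
      (cv * x⁻¹ - (cv + 1) * (a / (a * x + 1) - 1 / (a + x))) x := by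
    intro x hx
    have hx0 : 0 < x := by linarith
    have h1 : (0:ℝ) < a * x + 1 := by nlinarith
    have h2 : (0:ℝ) < a + x := by linarith
    have d1 : HasDerivAt (fun x : ℝ => Real.log x) x⁻¹ x := Real.hasDerivAt_log hx0.ne'
    have d2 : HasDerivAt (fun x : ℝ => Real.log (a * x + 1)) (a / (a * x + 1)) x := by
      have : HasDerivAt (fun x : ℝ => a * x + 1) a x := by
        simpa using ((hasDerivAt_id x).const_mul a).add_const 1
      simpa [div_eq_mul_inv, mul_comm, Function.comp_def] using (Real.hasDerivAt_log h1.ne').comp x this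
    have d3 : HasDerivAt (fun x : ℝ => Real.log (a + x)) (1 / (a + x)) x := by
      have : HasDerivAt (fun x : ℝ => a + x) 1 x := by
        simpa using (hasDerivAt_id x).const_add a
      simpa [div_eq_mul_inv, Function.comp_def] using (Real.hasDerivAt_log h2.ne').comp x this
    exact (d1.const_mul cv).sub ((d2.sub d3).const_mul (cv + 1))
  have hmono : StrictMonoOn F (Set.Ici 1) := by
    apply strictMonoOn_of_deriv_pos (convex_Ici 1)
    · exact fun x hx => ((hderiv x hx).continuousAt).continuousWithinAt
    · intro x hx
      rw [interior_Ici] at hx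
      have hx1 : 1 < x := hx
      have hx0 : 0 < x := by linarith
      have h1 : (0:ℝ) < a * x + 1 := by nlinarith
      have h2 : (0:ℝ) < a + x := by linarith
      rw [(hderiv x hx1.le).deriv]
      have heq : cv * x⁻¹ - (cv + 1) * (a / (a * x + 1) - 1 / (a + x))
          = cv * (a * (x - 1) ^ 2) / (x * ((a * x + 1) * (a + x))) := by
        field_simp
        ring
      rw [heq]
      have ha0 : (0:ℝ) < a := by linarith
      apply div_pos
      · have : (0:ℝ) < (x - 1) ^ 2 := by nlinarith
        positivity
      · positivity
  have hF1 : F 1 = 0 := by simp [hF]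
  have hFt : 0 < F t := by
    rw [← hF1]
    exact hmono (Set.self_mem_Ici) (Set.mem_Ici.2 ht.le) ht
  -- now convert
  have ht0 : 0 < t := by linarith
  have h1 : (0:ℝ) < a * t + 1 := by nlinarith
  have h2 : (0:ℝ) < a + t := by linarith
  have hr0 : 0 < (a * t + 1) / (a + t) := div_pos h1 h2
  have hlog : (cv + 1) * Real.log ((a * t + 1) / (a + t)) < cv * Real.log t := by
    rw [Real.log_div h1.ne' h2.ne']
    simpa [hF] using hFt
  have hlog2 : Real.log (((a * t + 1) / (a + t)) ^ ((cv + 1) / cv)) < Real.log t := by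
    rw [Real.log_rpow hr0]
    rw [div_mul_eq_mul_div, div_lt_iff₀ hcv0]
    nlinarith [hlog]
  have := Real.exp_lt_exp.2 hlog2
  rwa [Real.exp_log (Real.rpow_pos_of_pos hr0 _), Real.exp_log ht0] at this

/-- The limiting quantity `Ẽ` equals the product formula involving `f(p₊/p₋)` and is
therefore positive (Section 3.8 of the paper). -/
theorem Etilde_positive
    (cv ρm pm pp W Et : ℝ)
    (hcv : 1 / 2 < cv) (hρm : 0 < ρm) (hpm : 0 < pm) (hpmp : pm < pp)
    (hW : W = 2 * cv * (pp - pm) ^ 2 / ((2 * cv + 1) * pp + pm))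
    (hEt : Et = pm / ρm * ((1 - 2 * cv)
        * ((pp - pm) / (pp - pm - W)) ^ (1 / cv) + 2 * cv
        + (W * (pm + 2 * pp) - pp * (pp - pm)) / (pm * (pp - pm)))) :
    Et = pm * (2 * cv - 1) * ((2 * cv + 1) * pm + pp)
        / (ρm * ((2 * cv + 1) * pp + pm))
        * (pp / pm
          - (((2 * cv + 1) * (pp / pm) + 1) / ((2 * cv + 1) + pp / pm)) ^ ((cv + 1) / cv)) ∧
    0 < Et := by
  have hcv0 : 0 < cv := by linarith
  have hpp : 0 < pp := by linarith
  have hd : 0 < pp - pm := by linarith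
  have hD1 : 0 < (2 * cv + 1) * pp + pm := by nlinarith
  have hD2 : 0 < (2 * cv + 1) * pm + pp := by nlinarith
  set R : ℝ := ((2 * cv + 1) * pp + pm) / ((2 * cv + 1) * pm + pp) with hRdef
  have hR0 : 0 < R := div_pos hD1 hD2
  -- the argument of the rpow in the goal equals R
  have hrg : ((2 * cv + 1) * (pp / pm) + 1) / ((2 * cv + 1) + pp / pm) = R := by
    rw [hRdef]
    field_simp
  -- the argument of the rpow in hEt equals R
  have harg : (pp - pm) / (pp - pm - W) = R := by
    rw [hW, hRdef]
    have h1 : pp - pm - 2 * cv * (pp - pm) ^ 2 / ((2 * cv + 1) * pp + pm)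
        = (pp - pm) * ((2 * cv + 1) * pm + pp) / ((2 * cv + 1) * pp + pm) := by
      field_simp
      ring
    rw [h1]
    rw [div_div_eq_mul_div, mul_div_mul_left _ _ hd.ne']
  -- split the exponent
  have hsplit : R ^ ((cv + 1) / cv) = R * R ^ (1 / cv) := by
    have : (cv + 1) / cv = 1 + 1 / cv := by field_simp
    rw [this, Real.rpow_add hR0, Real.rpow_one]
  have hmain : Et = pm * (2 * cv - 1) * ((2 * cv + 1) * pm + pp)
      / (ρm * ((2 * cv + 1) * pp + pm))
      * (pp / pm - (((2 * cv + 1) * (pp / pm) + 1) / ((2 * cv + 1) + pp / pm)) ^ ((cv + 1) / cv)) := by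
    rw [hrg, hsplit, hEt, harg, hW, hRdef]
    field_simp
    ring
  refine ⟨hmain, ?_⟩
  rw [hmain]
  apply mul_pos
  · exact div_pos (mul_pos (mul_pos hpm (by linarith)) hD2) (mul_pos hρm hD1)
  · have := key_ineq cv (pp / pm) hcv ((one_lt_div hpm).2 hpmp)
    linarith
end
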